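/- arXiv:1312.3288 — 6 statements merged into one kernel-verified Lean document; each statement's English description precedes it below -/
import Mathlib

section
/- A bipartite graph H with bipartition (U, V) is a bicluster graph if and only if for all vertices i, k in U with i ≠ k and all vertices j, l in V with j ≠ l, whenever i is adjacent to l, k is adjacent to j, and k is adjacent to l in H, then i is adjacent to j in H. -/
variable {α : Type*}

/-- `G` is a bipartite graph with bipartition `(U, V)`: the parts cover the vertex set,
are disjoint, and every edge joins a vertex of `U` to a vertex of `V`. -/
def IsBipartiteWith (G : SimpleGraph α) (U V : Set α) : Prop :=
  (∀ x, x ∈ U ∨ x ∈ V) ∧ Disjoint U V ∧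
    ∀ ⦃x y⦄, G.Adj x y → (x ∈ U ∧ y ∈ V) ∨ (x ∈ V ∧ y ∈ U)

/-- A bicluster graph with bipartition `(U, V)`: a bipartite graph each of whose connected
components is a complete bipartite graph, i.e. any two vertices of `U` and `V` lying in the
same connected component are adjacent. -/
def IsBiclusterGraph (G : SimpleGraph α) (U V : Set α) : Prop :=
  IsBipartiteWith G U V ∧ ∀ i ∈ U, ∀ j ∈ V, G.Reachable i j → G.Adj i j

/-- `G` contains the path on four vertices `P4` as an induced subgraph. -/
def HasInducedP4 (G : SimpleGraph α) : Prop :=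
  ∃ a b c d : α, a ≠ b ∧ a ≠ c ∧ a ≠ d ∧ b ≠ c ∧ b ≠ d ∧ c ≠ d ∧
    G.Adj a b ∧ G.Adj b c ∧ G.Adj c d ∧ ¬ G.Adj a c ∧ ¬ G.Adj b d ∧ ¬ G.Adj a d

/-- The edit cost of `H` relative to `G`: number of edge deletions plus edge additions. -/
noncomputable def editCost (G H : SimpleGraph α) : ℕ :=
  (G.edgeSet \ H.edgeSet).ncard + (H.edgeSet \ G.edgeSet).ncard

/-- `H` is an optimal bicluster editing of `G` with respect to the bipartition `(U, V)`. -/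
def IsOptimalBiclusterEditing (G H : SimpleGraph α) (U V : Set α) : Prop :=
  IsBiclusterGraph H U V ∧
    ∀ H' : SimpleGraph α, IsBiclusterGraph H' U V → editCost G H ≤ editCost G H'

/-- The grouping efficacy `(m - d) / (m + a)` of `H` relative to `G`, where `m = |E(G)|`,
`d` is the number of deleted edges and `a` the number of added edges. -/
noncomputable def efficacy (G H : SimpleGraph α) : ℝ :=
  ((G.edgeSet.ncard : ℝ) - ((G.edgeSet \ H.edgeSet).ncard : ℝ)) /
    ((G.edgeSet.ncard : ℝ) + ((H.edgeSet \ G.edgeSet).ncard : ℝ))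

/-- A bipartite graph `H` with bipartition `(U, V)` is a bicluster graph iff for all
`i ≠ k` in `U` and `j ≠ l` in `V`, whenever `il`, `kj`, `kl` are edges, so is `ij`. -/
theorem bicluster_iff_constraints [Fintype α] (H : SimpleGraph α) (U V : Set α)
    (hH : IsBipartiteWith H U V) :
    IsBiclusterGraph H U V ↔
      ∀ i ∈ U, ∀ k ∈ U, ∀ j ∈ V, ∀ l ∈ V, i ≠ k → j ≠ l →
        H.Adj i l → H.Adj k j → H.Adj k l → H.Adj i j := by
  obtain ⟨hcov, hdisj, hedge⟩ := hH
  constructor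
  · rintro ⟨_, hreach⟩ i hi k hk j hj l hl hik hjl hil hkj hkl
    exact hreach i hi j hj (hil.reachable.trans (hkl.symm.reachable.trans hkj.reachable))
  · intro hc
    refine ⟨⟨hcov, hdisj, hedge⟩, ?_⟩
    intro i hi j hj hr
    obtain ⟨p⟩ := hr
    suffices h : ∀ n (x y : α) (p : SimpleGraph.Walk H x y), p.length ≤ n → x ∈ U → y ∈ V →
        H.Adj x y from h p.length i j p le_rfl hi hj
    intro n
    induction n with
    | zero =>
      intro x y p hp hx hy
      cases p with
      | nil => exact absurd hy (Set.disjoint_left.mp hdisj hx)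
      | cons h q => simp at hp
    | succ n ih =>
      intro x y p hp hx hy
      cases p with
      | nil => exact absurd hy (Set.disjoint_left.mp hdisj hx)
      | @cons _ b _ hxb q =>
        have hbV : b ∈ V := by
          rcases hedge hxb with ⟨_, hb⟩ | ⟨hx', _⟩
          · exact hb
          · exact absurd hx' (Set.disjoint_left.mp hdisj hx)
        cases q with
        | nil => exact hxb
        | @cons _ c _ hbc r =>
          have hcU : c ∈ U := by
            rcases hedge hbc with ⟨hb', _⟩ | ⟨_, hc'⟩
            · exact (Set.disjoint_left.mp hdisj hb' hbV).elim
            · exact hc'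
          have hcy : H.Adj c y := by
            refine ih c y r ?_ hcU hy
            simp only [SimpleGraph.Walk.length_cons] at hp
            omega
          by_cases hxc : x = c
          · exact hxc ▸ hcy
          by_cases hyb : y = b
          · exact hyb ▸ hxb
          · exact hc x hx c hcU y hy b hbV hxc hyb hxb hcy hbc.symm
end

section
/- Let G be a finite bipartite graph with bipartition (U, V), and let a, b be two vertices of G such that either a and b lie in different connected components of G, or the graph distance between a and b in G is at least 4. Then there exists an optimal bicluster editing H of G in which a and b lie in different connected components of H (i.e., in distinct biclusters). -/
variable {α : Type*}

section Aux

private def splitG (H : SimpleGraph α) (S : Set α) : SimpleGraph α where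
  Adj x y := H.Adj x y ∧ (x ∈ S ↔ y ∈ S)
  symm := ⟨fun _ _ h => ⟨h.1.symm, h.2.symm⟩⟩
  loopless := ⟨fun x h => H.loopless.irrefl x h.1⟩

@[simp] private lemma splitG_adj (H : SimpleGraph α) (S : Set α) (x y : α) :
    (splitG H S).Adj x y ↔ H.Adj x y ∧ (x ∈ S ↔ y ∈ S) := Iff.rfl

private lemma splitG_le (H : SimpleGraph α) (S : Set α) : splitG H S ≤ H := fun _ _ h => h.1

private lemma splitG_reach {H : SimpleGraph α} {S : Set α} {x y : α}
    (h : (splitG H S).Reachable x y) : x ∈ S ↔ y ∈ S := by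
  obtain ⟨w⟩ := h
  induction w with
  | nil => exact Iff.rfl
  | cons hadj _ ih => exact hadj.2.trans ih

private lemma IsBipartiteWith.symm' {G : SimpleGraph α} {U V : Set α}
    (h : IsBipartiteWith G U V) : IsBipartiteWith G V U :=
  ⟨fun x => (h.1 x).symm, h.2.1.symm, fun _ _ hxy => (h.2.2 hxy).symm⟩

private lemma IsBiclusterGraph.symm' {H : SimpleGraph α} {U V : Set α}
    (h : IsBiclusterGraph H U V) : IsBiclusterGraph H V U :=
  ⟨h.1.symm', fun i hi j hj hr => (h.2 j hj i hi hr.symm).symm⟩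

private lemma splitG_bicluster {H : SimpleGraph α} {U V : Set α}
    (hH : IsBiclusterGraph H U V) (S : Set α) : IsBiclusterGraph (splitG H S) U V :=
  ⟨⟨hH.1.1, hH.1.2.1, fun _ _ h => hH.1.2.2 h.1⟩,
   fun i hi j hj hr => ⟨hH.2 i hi j hj (hr.mono (splitG_le H S)), splitG_reach hr⟩⟩

private lemma adj_right {G : SimpleGraph α} {U V : Set α} (hG : IsBipartiteWith G U V)
    {x y : α} (hx : x ∈ U) (h : G.Adj x y) : y ∈ V := by
  rcases hG.2.2 h with ⟨_, h2⟩ | ⟨h1, _⟩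
  · exact h2
  · exact absurd hx (Set.disjoint_right.mp hG.2.1 h1)

private lemma cost_le [Fintype α] {G H H' : SimpleGraph α} (hle : H' ≤ H)
    (hcnt : ((H.edgeSet \ H'.edgeSet) ∩ G.edgeSet).ncard ≤
      ((H.edgeSet \ H'.edgeSet) \ G.edgeSet).ncard) :
    editCost G H' ≤ editCost G H := by
  classical
  have hsub : H'.edgeSet ⊆ H.edgeSet := SimpleGraph.edgeSet_mono hle
  have h1 : G.edgeSet \ H'.edgeSet =
      (G.edgeSet \ H.edgeSet) ∪ ((H.edgeSet \ H'.edgeSet) ∩ G.edgeSet) := by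
    ext e
    have := @hsub e
    simp only [Set.mem_diff, Set.mem_union, Set.mem_inter_iff]
    tauto
  have h2 : H.edgeSet \ G.edgeSet =
      (H'.edgeSet \ G.edgeSet) ∪ ((H.edgeSet \ H'.edgeSet) \ G.edgeSet) := by
    ext e
    have := @hsub e
    simp only [Set.mem_diff, Set.mem_union]
    tauto
  have d1 : Disjoint (G.edgeSet \ H.edgeSet) ((H.edgeSet \ H'.edgeSet) ∩ G.edgeSet) := by
    rw [Set.disjoint_left]
    rintro e ⟨_, he⟩ ⟨⟨he', _⟩, _⟩
    exact he he'
  have d2 : Disjoint (H'.edgeSet \ G.edgeSet) ((H.edgeSet \ H'.edgeSet) \ G.edgeSet) := by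
    rw [Set.disjoint_left]
    rintro e ⟨he, _⟩ ⟨⟨_, he'⟩, _⟩
    exact he' he
  unfold editCost
  rw [h1, h2, Set.ncard_union_eq d1 (Set.toFinite _) (Set.toFinite _),
    Set.ncard_union_eq d2 (Set.toFinite _) (Set.toFinite _)]
  omega

private lemma ncard_prod' (A C : Set α) : (A ×ˢ C).ncard = A.ncard * C.ncard := by
  rw [← Nat.card_coe_set_eq, ← Nat.card_coe_set_eq, ← Nat.card_coe_set_eq,
    Nat.card_congr (Equiv.Set.prod A C), Nat.card_prod]

private lemma ncard_sym2_prod (A C : Set α) (h : Disjoint A C) :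
    (Sym2.mk.uncurry '' (A ×ˢ C)).ncard = A.ncard * C.ncard := by
  rw [Set.ncard_image_of_injOn, ncard_prod']
  rintro ⟨x, y⟩ ⟨hx, hy⟩ ⟨x', y'⟩ ⟨hx', hy'⟩ he
  simp only at hx hy hx' hy'
  change s(x, y) = s(x', y') at he
  rw [Sym2.eq_iff] at he
  rcases he with ⟨h1, h2⟩ | ⟨h1, h2⟩
  · exact Prod.ext h1 h2
  · subst h1; exact absurd hy' (Set.disjoint_left.mp h hx)

private lemma ncard_pair_image (a : α) (T : Set α) (ha : a ∉ T) :
    ((fun y => s(a, y)) '' T).ncard = T.ncard := by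
  apply Set.ncard_image_of_injOn
  intro y hy y' hy' he
  simp only [Sym2.eq_iff] at he
  rcases he with ⟨_, h⟩ | ⟨h1, _⟩
  · exact h
  · subst h1; exact absurd hy' ha

private lemma singleton_split [Fintype α] {G H : SimpleGraph α} {U V : Set α}
    (hG : IsBipartiteWith G U V) (hH : IsBiclusterGraph H U V) (a : α) (ha : a ∈ U)
    (hcnt : 2 * {y | H.Reachable a y ∧ G.Adj a y}.ncard ≤
      {y | y ∈ V ∧ H.Reachable a y}.ncard) :
    ∃ H' : SimpleGraph α, IsBiclusterGraph H' U V ∧ editCost G H' ≤ editCost G H ∧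
      ∀ x, x ≠ a → ¬ H'.Reachable a x := by
  classical
  refine ⟨splitG H {a}, splitG_bicluster hH _, ?_, ?_⟩
  · have hadj_iff : ∀ y, H.Adj a y ↔ (y ∈ V ∧ H.Reachable a y) := by
      intro y
      constructor
      · intro h; exact ⟨adj_right hH.1 ha h, h.reachable⟩
      · intro h; exact hH.2 a ha y h.1 h.2
    have hR : H.edgeSet \ (splitG H ({a} : Set α)).edgeSet
        = (fun y => s(a, y)) '' {y | H.Adj a y} := by
      ext e
      induction e using Sym2.ind with
      | _ x y =>
        simp only [Set.mem_diff, SimpleGraph.mem_edgeSet, splitG_adj, Set.mem_image,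
          Set.mem_setOf_eq, Set.mem_singleton_iff, not_and, not_iff]
        constructor
        · intro ⟨hxy, hne⟩
          have hne' := hne hxy
          by_cases hx : x = a
          · subst hx; exact ⟨y, hxy, rfl⟩
          · have hy : y = a := by tauto
            subst hy; exact ⟨x, hxy.symm, Sym2.eq_swap⟩
        · rintro ⟨y', hy', he⟩
          rw [Sym2.eq_iff] at he
          have hy'a : y' ≠ a := fun h => H.loopless.irrefl a (h ▸ hy')
          rcases he with ⟨h1, h2⟩ | ⟨h1, h2⟩
          · subst h1; subst h2
            exact ⟨hy', fun _ => by tauto⟩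
          · subst h1; subst h2
            exact ⟨hy'.symm, fun _ => by tauto⟩
    have hRG : (H.edgeSet \ (splitG H ({a} : Set α)).edgeSet) ∩ G.edgeSet
        = (fun y => s(a, y)) '' {y | H.Adj a y ∧ G.Adj a y} := by
      rw [hR]; ext e
      constructor
      · rintro ⟨⟨y, hy, rfl⟩, hg⟩
        exact ⟨y, ⟨hy, G.mem_edgeSet.mp hg⟩, rfl⟩
      · rintro ⟨y, ⟨hy1, hy2⟩, rfl⟩
        exact ⟨⟨y, hy1, rfl⟩, G.mem_edgeSet.mpr hy2⟩
    have hRG' : (H.edgeSet \ (splitG H ({a} : Set α)).edgeSet) \ G.edgeSet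
        = (fun y => s(a, y)) '' {y | H.Adj a y ∧ ¬ G.Adj a y} := by
      rw [hR]; ext e
      constructor
      · rintro ⟨⟨y, hy, rfl⟩, hg⟩
        exact ⟨y, ⟨hy, fun h => hg (G.mem_edgeSet.mpr h)⟩, rfl⟩
      · rintro ⟨y, ⟨hy1, hy2⟩, rfl⟩
        exact ⟨⟨y, hy1, rfl⟩, fun h => hy2 (G.mem_edgeSet.mp h)⟩
    apply cost_le (splitG_le H _)
    rw [hRG, hRG', ncard_pair_image a _ (fun h => H.loopless.irrefl a h.1),
      ncard_pair_image a _ (fun h => H.loopless.irrefl a h.1)]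
    have e1 : {y | H.Adj a y ∧ G.Adj a y} = {y | H.Reachable a y ∧ G.Adj a y} := by
      ext y
      simp only [Set.mem_setOf_eq, hadj_iff]
      exact ⟨fun h => ⟨h.1.2, h.2⟩, fun h => ⟨⟨adj_right hG ha h.2, h.1⟩, h.2⟩⟩
    have e2 : {y | H.Adj a y ∧ ¬ G.Adj a y}
        = {y | y ∈ V ∧ H.Reachable a y} \ {y | H.Reachable a y ∧ G.Adj a y} := by
      ext y
      simp only [Set.mem_setOf_eq, Set.mem_diff, hadj_iff]
      tauto
    have hsubN : {y | H.Reachable a y ∧ G.Adj a y} ⊆ {y | y ∈ V ∧ H.Reachable a y} :=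
      fun y hy => ⟨adj_right hG ha hy.2, hy.1⟩
    have hle' := Set.ncard_le_ncard hsubN (Set.toFinite _)
    rw [e1, e2, Set.ncard_diff hsubN (Set.toFinite _)]
    omega
  · intro x hx hre
    exact hx (Set.mem_singleton_iff.mp ((splitG_reach hre).mp rfl))

private lemma improve [Fintype α] {G : SimpleGraph α} {U V : Set α}
    (hG : IsBipartiteWith G U V) {H : SimpleGraph α} (hH : IsBiclusterGraph H U V)
    {a b : α} (hw : ∀ w : G.Walk a b, 4 ≤ w.length) (ha : a ∈ U) (hr : H.Reachable a b) :
    ∃ H' : SimpleGraph α, IsBiclusterGraph H' U V ∧ editCost G H' ≤ editCost G H ∧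
      ¬ H'.Reachable a b := by
  classical
  have hne : a ≠ b := by rintro rfl; simpa using hw .nil
  have hnadj : ¬ G.Adj a b := fun h => by simpa using hw (.cons h .nil)
  rcases hG.1 b with hb | hb
  · -- b ∈ U : split off a or b, whichever has the smaller neighborhood
    have hsub1 : {y | H.Reachable a y ∧ G.Adj a y} ⊆ {y | y ∈ V ∧ H.Reachable a y} :=
      fun y hy => ⟨adj_right hG ha hy.2, hy.1⟩
    have hsub2 : {y | H.Reachable b y ∧ G.Adj b y} ⊆ {y | y ∈ V ∧ H.Reachable a y} :=
      fun y hy => ⟨adj_right hG hb hy.2, hr.trans hy.1⟩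
    have hdisj : Disjoint {y | H.Reachable a y ∧ G.Adj a y}
        {y | H.Reachable b y ∧ G.Adj b y} := by
      rw [Set.disjoint_left]
      rintro y ⟨_, hay⟩ ⟨_, hby⟩
      simpa using hw (.cons hay (.cons hby.symm .nil))
    have hsum : {y | H.Reachable a y ∧ G.Adj a y}.ncard
        + {y | H.Reachable b y ∧ G.Adj b y}.ncard
        ≤ {y | y ∈ V ∧ H.Reachable a y}.ncard := by
      rw [← Set.ncard_union_eq hdisj (Set.toFinite _) (Set.toFinite _)]
      exact Set.ncard_le_ncard (Set.union_subset hsub1 hsub2) (Set.toFinite _)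
    rcases le_total {y | H.Reachable a y ∧ G.Adj a y}.ncard
        {y | H.Reachable b y ∧ G.Adj b y}.ncard with hmin | hmin
    · obtain ⟨H', h1, h2, h3⟩ := singleton_split hG hH a ha (by omega)
      exact ⟨H', h1, h2, h3 b hne.symm⟩
    · have hYb : {y | y ∈ V ∧ H.Reachable b y} = {y | y ∈ V ∧ H.Reachable a y} := by
        ext y
        exact and_congr_right fun _ => ⟨fun h => hr.trans h, fun h => hr.symm.trans h⟩
      obtain ⟨H', h1, h2, h3⟩ := singleton_split hG hH b hb (by rw [hYb]; omega)
      exact ⟨H', h1, h2, fun hre => h3 a hne hre.symm⟩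
  · -- b ∈ V
    by_cases hc1 : 2 * {y | H.Reachable a y ∧ G.Adj a y}.ncard
        ≤ {y | y ∈ V ∧ H.Reachable a y}.ncard
    · obtain ⟨H', h1, h2, h3⟩ := singleton_split hG hH a ha hc1
      exact ⟨H', h1, h2, h3 b hne.symm⟩
    by_cases hc2 : 2 * {x | H.Reachable b x ∧ G.Adj b x}.ncard
        ≤ {x | x ∈ U ∧ H.Reachable b x}.ncard
    · obtain ⟨H', h1, h2, h3⟩ := singleton_split hG.symm' hH.symm' b hb hc2
      exact ⟨H', h1.symm', h2, fun hre => h3 a hne hre.symm⟩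
    -- mixed split
    push_neg at hc1 hc2
    set N : Set α := {y | H.Reachable a y ∧ G.Adj a y} with hN
    set M : Set α := {x | H.Reachable b x ∧ G.Adj b x} with hM
    set YB : Set α := {y | y ∈ V ∧ H.Reachable a y} with hYB
    set XB : Set α := {x | x ∈ U ∧ H.Reachable a x} with hXB
    have hXBb : {x | x ∈ U ∧ H.Reachable b x} = XB := by
      ext x
      exact and_congr_right fun _ => ⟨fun h => hr.trans h, fun h => hr.symm.trans h⟩
    rw [hXBb] at hc2
    have hNV : N ⊆ YB := fun y hy => ⟨adj_right hG ha hy.2, hy.1⟩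
    have hMX : M ⊆ XB := fun x hx => ⟨adj_right hG.symm' hb hx.2, hr.trans hx.1⟩
    set S : Set α := (XB \ M) ∪ N with hS
    have haS : a ∈ S := Or.inl ⟨⟨ha, SimpleGraph.Reachable.refl a⟩,
      fun hMa => by simpa using hw (.cons hMa.2.symm .nil)⟩
    have hbS : b ∉ S := by
      rintro (⟨⟨hbU, _⟩, _⟩ | hNb)
      · exact Set.disjoint_left.mp hG.2.1 hbU hb
      · exact hnadj hNb.2
    have hS_U : ∀ x ∈ U, (x ∈ S ↔ x ∈ XB \ M) := by
      intro x hxU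
      constructor
      · rintro (h | h)
        · exact h
        · exact absurd (adj_right hG ha h.2) (Set.disjoint_left.mp hG.2.1 hxU)
      · exact Or.inl
    have hS_V : ∀ y ∈ V, (y ∈ S ↔ y ∈ N) := by
      intro y hyV
      constructor
      · rintro (⟨⟨hyU, _⟩, _⟩ | h)
        · exact absurd hyV (Set.disjoint_left.mp hG.2.1 hyU)
        · exact h
      · exact Or.inr
    have hmem_adj : ∀ x ∈ XB, ∀ y ∈ YB, H.Adj x y :=
      fun x hx y hy => hH.2 x hx.1 y hy.1 (hx.2.symm.trans hy.2)
    have hmain : ∀ x y, H.Adj x y → x ∈ U → y ∈ V → ¬ (x ∈ S ↔ y ∈ S) →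
        s(x, y) ∈ Sym2.mk.uncurry '' ((XB \ M) ×ˢ (YB \ N)) ∨ s(x, y) ∈ Sym2.mk.uncurry '' (M ×ˢ N) := by
      intro x y hxy hxU hyV hcr
      by_cases hxS : x ∈ S
      · have hyS : y ∉ S := fun h => hcr (iff_of_true hxS h)
        have hxXM : x ∈ XB \ M := (hS_U x hxU).mp hxS
        have hyN : y ∉ N := fun h => hyS ((hS_V y hyV).mpr h)
        have hyY : y ∈ YB := ⟨hyV, hxXM.1.2.trans hxy.reachable⟩
        exact Or.inl ⟨(x, y), Set.mk_mem_prod hxXM ⟨hyY, hyN⟩, rfl⟩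
      · have hyS : y ∈ S := by
          by_contra h; exact hcr (iff_of_false hxS h)
        have hyN : y ∈ N := (hS_V y hyV).mp hyS
        have hxXB : x ∈ XB := ⟨hxU, hyN.1.trans hxy.symm.reachable⟩
        have hxM : x ∈ M := by
          by_contra h; exact hxS ((hS_U x hxU).mpr ⟨hxXB, h⟩)
        exact Or.inr ⟨(x, y), Set.mk_mem_prod hxM hyN, rfl⟩
    have hP1R : Sym2.mk.uncurry '' ((XB \ M) ×ˢ (YB \ N))
        ⊆ H.edgeSet \ (splitG H S).edgeSet := by
      rintro e ⟨⟨x, y⟩, ⟨hx, hy⟩, rfl⟩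
      simp only at hx hy
      refine ⟨H.mem_edgeSet.mpr (hmem_adj x hx.1 y hy.1), fun hsp => ?_⟩
      have hsp' := ((splitG H S).mem_edgeSet.mp hsp).2
      exact hy.2 ((hS_V y hy.1.1).mp (hsp'.mp ((hS_U x hx.1.1).mpr hx)))
    have hP2R : Sym2.mk.uncurry '' (M ×ˢ N) ⊆ H.edgeSet \ (splitG H S).edgeSet := by
      rintro e ⟨⟨x, y⟩, ⟨hx, hy⟩, rfl⟩
      simp only at hx hy
      have hxXB' := hMX hx
      have hyYB' := hNV hy
      refine ⟨H.mem_edgeSet.mpr (hmem_adj x hxXB' y hyYB'), fun hsp => ?_⟩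
      have hsp' := ((splitG H S).mem_edgeSet.mp hsp).2
      have hxS : x ∉ S := fun h => (((hS_U x hxXB'.1).mp h)).2 hx
      exact hxS (hsp'.mpr ((hS_V y hyYB'.1).mpr hy))
    have hR : H.edgeSet \ (splitG H S).edgeSet
        = Sym2.mk.uncurry '' ((XB \ M) ×ˢ (YB \ N)) ∪ Sym2.mk.uncurry '' (M ×ˢ N) := by
      apply Set.Subset.antisymm
      · intro e he
        induction e using Sym2.ind with
        | _ x y =>
          obtain ⟨heH, heS⟩ := he
          have hxy : H.Adj x y := H.mem_edgeSet.mp heH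
          have hcr : ¬ (x ∈ S ↔ y ∈ S) := fun h =>
            heS ((splitG H S).mem_edgeSet.mpr ⟨hxy, h⟩)
          rcases hH.1.2.2 hxy with ⟨hxU, hyV⟩ | ⟨hxV, hyU⟩
          · exact hmain x y hxy hxU hyV hcr
          · rw [Sym2.eq_swap]
            exact hmain y x hxy.symm hyU hxV (fun h => hcr h.symm)
      · exact Set.union_subset hP1R hP2R
    have hP2G : ∀ e ∈ Sym2.mk.uncurry '' (M ×ˢ N), e ∉ G.edgeSet := by
      rintro e ⟨⟨x, y⟩, ⟨hx, hy⟩, rfl⟩ heG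
      simp only at hx hy
      have hxyG : G.Adj x y := G.mem_edgeSet.mp heG
      simpa using hw (.cons hy.2 (.cons hxyG.symm (.cons hx.2.symm .nil)))
    refine ⟨splitG H S, splitG_bicluster hH S, ?_, fun hre => hbS ((splitG_reach hre).mp haS)⟩
    apply cost_le (splitG_le H S)
    have hsubP1 : (H.edgeSet \ (splitG H S).edgeSet) ∩ G.edgeSet
        ⊆ Sym2.mk.uncurry '' ((XB \ M) ×ˢ (YB \ N)) := by
      rintro e ⟨heR, heG⟩
      rw [hR] at heR
      rcases heR with h | h
      · exact h
      · exact absurd heG (hP2G e h)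
    have hsubP2 : Sym2.mk.uncurry '' (M ×ˢ N) ⊆ (H.edgeSet \ (splitG H S).edgeSet) \ G.edgeSet :=
      fun e he => ⟨hP2R he, hP2G e he⟩
    have c1 := Set.ncard_le_ncard hsubP1 (Set.toFinite _)
    have c2 := Set.ncard_le_ncard hsubP2 (Set.toFinite _)
    have dP1 : Disjoint (XB \ M) (YB \ N) :=
      (hG.2.1.mono (fun x hx => hx.1.1) (fun y hy => hy.1.1))
    have dP2 : Disjoint M N :=
      (hG.2.1.mono (fun x hx => (hMX hx).1) (fun y hy => (hNV hy).1))
    rw [ncard_sym2_prod _ _ dP1] at c1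
    rw [ncard_sym2_prod _ _ dP2] at c2
    have hxle : (XB \ M).ncard ≤ M.ncard := by
      rw [Set.ncard_diff hMX (Set.toFinite _)]
      have := Set.ncard_le_ncard hMX (Set.toFinite _)
      omega
    have hyle : (YB \ N).ncard ≤ N.ncard := by
      rw [Set.ncard_diff hNV (Set.toFinite _)]
      have := Set.ncard_le_ncard hNV (Set.toFinite _)
      omega
    calc ((H.edgeSet \ (splitG H S).edgeSet) ∩ G.edgeSet).ncard
        ≤ (XB \ M).ncard * (YB \ N).ncard := c1
      _ ≤ M.ncard * N.ncard := Nat.mul_le_mul hxle hyle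
      _ ≤ ((H.edgeSet \ (splitG H S).edgeSet) \ G.edgeSet).ncard := c2

private lemma exists_optimal [Fintype α] (G : SimpleGraph α) (U V : Set α)
    (hG : IsBipartiteWith G U V) : ∃ H, IsOptimalBiclusterEditing G H U V := by
  classical
  have hbot : IsBiclusterGraph (⊥ : SimpleGraph α) U V := by
    refine ⟨⟨hG.1, hG.2.1, fun x y h => absurd h (by simp)⟩, fun i hi j hj hrij => ?_⟩
    rw [SimpleGraph.reachable_bot] at hrij
    exact absurd (hrij ▸ hi) (Set.disjoint_right.mp hG.2.1 hj)
  have hex : ∃ n, ∃ H : SimpleGraph α, IsBiclusterGraph H U V ∧ editCost G H = n :=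
    ⟨_, ⊥, hbot, rfl⟩
  obtain ⟨H, hH, hHn⟩ := Nat.find_spec hex
  refine ⟨H, hH, fun H' hH' => ?_⟩
  calc editCost G H = Nat.find hex := hHn
    _ ≤ editCost G H' := Nat.find_min' hex ⟨H', hH', rfl⟩

end Aux

/-- If `a`, `b` lie in different components of `G` or are at distance at least `4`, then
there is an optimal bicluster editing of `G` in which `a`, `b` lie in distinct biclusters. -/
theorem exists_optimal_editing_separating [Fintype α] (G : SimpleGraph α) (U V : Set α)
    (hG : IsBipartiteWith G U V) (a b : α)
    (hab : ¬ G.Reachable a b ∨ 4 ≤ G.dist a b) :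
    ∃ H : SimpleGraph α, IsOptimalBiclusterEditing G H U V ∧ ¬ H.Reachable a b := by
  classical
  obtain ⟨H, hH⟩ := exists_optimal G U V hG
  have hw : ∀ w : G.Walk a b, 4 ≤ w.length := by
    rcases hab with h | h
    · exact fun w => absurd ⟨w⟩ h
    · exact fun w => h.trans (SimpleGraph.dist_le w)
  by_cases hre : H.Reachable a b
  · rcases hG.1 a with ha | ha
    · obtain ⟨H', h1, h2, h3⟩ := improve hG hH.1 hw ha hre
      exact ⟨H', ⟨h1, fun H'' h'' => h2.trans (hH.2 H'' h'')⟩, h3⟩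
    · obtain ⟨H', h1, h2, h3⟩ := improve hG.symm' hH.1.symm' hw ha hre
      exact ⟨H', ⟨h1.symm', fun H'' h'' => h2.trans (hH.2 H'' h'')⟩, h3⟩
  · exact ⟨H, hH, hre⟩
end

section
/- Let G be a finite bipartite graph with bipartition (U, V), and let a, b be two vertices lying in different connected components of G. Then in every optimal bicluster editing H of G, the vertices a and b lie in different connected components of H. -/
variable {α : Type*}

private lemma reach_of_all_adj {G H : SimpleGraph α}
    (h : ∀ x y, H.Adj x y → G.Reachable x y) {a b : α} (hr : H.Reachable a b) :
    G.Reachable a b := by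
  obtain ⟨w⟩ := hr
  induction w with
  | nil => exact SimpleGraph.Reachable.refl _
  | cons ha _ ih => exact (h _ _ ha).trans ih

/-- If `a`, `b` lie in different components of `G`, then they lie in different components
of every optimal bicluster editing of `G`. -/
theorem optimal_editing_separates_components [Fintype α] (G : SimpleGraph α) (U V : Set α)
    (hG : IsBipartiteWith G U V) (a b : α) (hab : ¬ G.Reachable a b) :
    ∀ H : SimpleGraph α, IsOptimalBiclusterEditing G H U V → ¬ H.Reachable a b := by
  intro H hopt hHab
  obtain ⟨⟨hHbip, hHbc⟩, hmin⟩ := hopt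
  -- There is an H-edge crossing G-components
  have hcross : ¬ ∀ x y, H.Adj x y → G.Reachable x y := fun h =>
    hab (reach_of_all_adj h hHab)
  push_neg at hcross
  obtain ⟨x, y, hxy, hnxy⟩ := hcross
  -- define H' : edges of H within G-components
  set H' : SimpleGraph α :=
    { Adj := fun u v => H.Adj u v ∧ G.Reachable u v
      symm := ⟨fun u v h => ⟨h.1.symm, h.2.symm⟩⟩
      loopless := ⟨fun u h => H.loopless.irrefl u h.1⟩ } with hH'def
  have hH'adj : ∀ u v, H'.Adj u v ↔ H.Adj u v ∧ G.Reachable u v := fun _ _ => Iff.rfl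
  have hH'le : H' ≤ H := fun u v h => h.1
  -- H' is a bicluster graph
  have hbc' : IsBiclusterGraph H' U V := by
    refine ⟨⟨hHbip.1, hHbip.2.1, fun u v (h : H.Adj u v ∧ G.Reachable u v) => hHbip.2.2 h.1⟩, ?_⟩
    intro i hi j hj hr
    have h1 : H.Reachable i j := hr.mono hH'le
    have h2 : G.Reachable i j := reach_of_all_adj (G := G) (H := H') (fun _ _ h => h.2) hr
    exact ⟨hHbc i hi j hj h1, h2⟩
  -- deleted edges coincide
  have hdel : G.edgeSet \ H'.edgeSet = G.edgeSet \ H.edgeSet := by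
    ext e
    induction e using Sym2.inductionOn with
    | hf u v =>
      simp only [Set.mem_diff, SimpleGraph.mem_edgeSet, hH'adj]
      constructor
      · rintro ⟨hg, hn⟩
        exact ⟨hg, fun hh => hn ⟨hh, hg.reachable⟩⟩
      · rintro ⟨hg, hn⟩
        exact ⟨hg, fun hh => hn hh.1⟩
  -- added edges strictly decrease
  have hadd : (H'.edgeSet \ G.edgeSet) ⊂ (H.edgeSet \ G.edgeSet) := by
    constructor
    · intro e he
      exact ⟨SimpleGraph.edgeSet_mono hH'le he.1, he.2⟩
    · intro hsub
      have hmem : s(x, y) ∈ H.edgeSet \ G.edgeSet := by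
        refine ⟨hxy, fun hg => hnxy ?_⟩
        exact ((SimpleGraph.mem_edgeSet G).mp hg).reachable
      have := hsub hmem
      exact hnxy this.1.2
  have hlt : editCost G H' < editCost G H := by
    unfold editCost
    rw [hdel]
    exact Nat.add_lt_add_left (Set.ncard_lt_ncard hadd (Set.toFinite _)) _
  exact absurd (hmin H' hbc') (Nat.not_le.mpr hlt)
end

section
/- Let G be a finite bipartite graph with bipartition (U, V), let a, b ∈ U with a ≠ b, and suppose that either a and b lie in different connected components of G, or the graph distance between a and b in G is at least 4. Then there exists an optimal bicluster editing H of G such that no vertex k ∈ V is adjacent in H to both a and b. -/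
variable {α : Type*}

section Aux

/-- Delete all edges incident to `a`. -/
private def eraseVert (H : SimpleGraph α) (a : α) : SimpleGraph α where
  Adj x y := H.Adj x y ∧ x ≠ a ∧ y ≠ a
  symm := ⟨fun x y ⟨h, hx, hy⟩ => ⟨h.symm, hy, hx⟩⟩
  loopless := ⟨fun x ⟨h, _, _⟩ => H.irrefl h⟩

private lemma eraseVert_le (H : SimpleGraph α) (a : α) : eraseVert H a ≤ H :=
  fun _ _ h => h.1

private lemma eraseVert_not_adj (H : SimpleGraph α) (a : α) (x : α) :
    ¬ (eraseVert H a).Adj a x := fun h => h.2.1 rfl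

private lemma eraseVert_edgeSet (H : SimpleGraph α) (a : α) :
    (eraseVert H a).edgeSet = H.edgeSet \ {e : Sym2 α | a ∈ e} := by
  ext e
  induction e using Sym2.ind with
  | _ x y =>
    simp only [SimpleGraph.mem_edgeSet, Set.mem_diff, Set.mem_setOf_eq, Sym2.mem_iff]
    show (H.Adj x y ∧ x ≠ a ∧ y ≠ a) ↔ _
    constructor
    · rintro ⟨h, hx, hy⟩
      exact ⟨h, by rintro (rfl | rfl) <;> simp_all⟩
    · rintro ⟨h, hm⟩
      push_neg at hm
      exact ⟨h, fun hx => hm.1 hx.symm, fun hy => hm.2 hy.symm⟩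

private lemma isolated_reachable {K : SimpleGraph α} {a j : α}
    (hiso : ∀ x, ¬ K.Adj a x) (h : K.Reachable a j) : a = j := by
  obtain ⟨w⟩ := h
  cases w with
  | nil => rfl
  | cons h _ => exact absurd h (hiso _)

private lemma incident_eq_image (K : SimpleGraph α) (a : α) :
    K.edgeSet ∩ {e : Sym2 α | a ∈ e} = (fun k => s(a, k)) '' K.neighborSet a := by
  ext e
  induction e using Sym2.ind with
  | _ x y =>
    simp only [Set.mem_inter_iff, SimpleGraph.mem_edgeSet, Set.mem_setOf_eq, Sym2.mem_iff,
      Set.mem_image, SimpleGraph.mem_neighborSet]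
    constructor
    · rintro ⟨hxy, (rfl | rfl)⟩
      · exact ⟨y, hxy, rfl⟩
      · exact ⟨x, hxy.symm, Sym2.eq_swap⟩
    · rintro ⟨k, hk, hke⟩
      rw [Sym2.eq_iff] at hke
      rcases hke with ⟨rfl, rfl⟩ | ⟨rfl, rfl⟩
      · exact ⟨hk, Or.inl rfl⟩
      · exact ⟨hk.symm, Or.inr rfl⟩

private lemma ncard_incident (K : SimpleGraph α) (a : α) :
    (K.edgeSet ∩ {e : Sym2 α | a ∈ e}).ncard = (K.neighborSet a).ncard := by
  rw [incident_eq_image]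
  exact Set.ncard_image_of_injective _ (fun k1 k2 h => Sym2.congr_right.mp h)

private lemma eraseVert_bicluster {H : SimpleGraph α} {U V : Set α} {a : α}
    (hH : IsBiclusterGraph H U V) (ha : a ∈ U) :
    IsBiclusterGraph (eraseVert H a) U V := by
  obtain ⟨⟨hcov, hdisj, hadj⟩, hcl⟩ := hH
  refine ⟨⟨hcov, hdisj, fun x y h => hadj h.1⟩, ?_⟩
  intro i hi j hj hr
  by_cases hia : i = a
  · subst hia
    exfalso
    have := isolated_reachable (eraseVert_not_adj H i) hr
    subst this
    exact Set.disjoint_left.mp hdisj hi hj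
  · have hja : j ≠ a := fun h => Set.disjoint_left.mp hdisj ha (h ▸ hj)
    exact ⟨hcl i hi j hj (hr.mono (eraseVert_le H a)), hia, hja⟩

private lemma eraseVert_cost_le [Fintype α] {G H : SimpleGraph α} {a : α}
    (hcard : 2 * (G.neighborSet a ∩ H.neighborSet a).ncard ≤ (H.neighborSet a).ncard) :
    editCost G (eraseVert H a) ≤ editCost G H := by
  set P : Set (Sym2 α) := {e : Sym2 α | a ∈ e} with hP
  have h1 : G.edgeSet \ (eraseVert H a).edgeSet
      = (G.edgeSet \ H.edgeSet) ∪ ((G ⊓ H).edgeSet ∩ P) := by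
    rw [eraseVert_edgeSet, SimpleGraph.edgeSet_inf]
    ext e; simp only [Set.mem_diff, Set.mem_union, Set.mem_inter_iff]; tauto
  have h2 : (eraseVert H a).edgeSet \ G.edgeSet
      = (H \ G).edgeSet \ ((H \ G).edgeSet ∩ P) := by
    rw [eraseVert_edgeSet, SimpleGraph.edgeSet_sdiff]
    ext e; simp only [Set.mem_diff, Set.mem_inter_iff]; tauto
  have hdisj : Disjoint (G.edgeSet \ H.edgeSet) ((G ⊓ H).edgeSet ∩ P) := by
    rw [SimpleGraph.edgeSet_inf, Set.disjoint_left]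
    rintro e ⟨_, he⟩ ⟨⟨_, he'⟩, _⟩
    exact he he'
  have hxy : ((G ⊓ H).edgeSet ∩ P).ncard ≤ ((H \ G).edgeSet ∩ P).ncard := by
    rw [ncard_incident, ncard_incident]
    have hn1 : (G ⊓ H).neighborSet a = G.neighborSet a ∩ H.neighborSet a := by
      ext k; simp [SimpleGraph.mem_neighborSet, SimpleGraph.inf_adj]
    have hn2 : (H \ G).neighborSet a
        = H.neighborSet a \ (G.neighborSet a ∩ H.neighborSet a) := by
      ext k
      simp only [SimpleGraph.mem_neighborSet, SimpleGraph.sdiff_adj, Set.mem_diff,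
        Set.mem_inter_iff]
      tauto
    rw [hn1, hn2, Set.ncard_diff Set.inter_subset_right (Set.toFinite _)]
    omega
  have hsub : (H \ G).edgeSet ∩ P ⊆ (H \ G).edgeSet := Set.inter_subset_left
  have hm : ((H \ G).edgeSet ∩ P).ncard ≤ (H \ G).edgeSet.ncard :=
    Set.ncard_le_ncard hsub (Set.toFinite _)
  have h3 : H.edgeSet \ G.edgeSet = (H \ G).edgeSet := (SimpleGraph.edgeSet_sdiff _ _).symm
  unfold editCost
  rw [h1, h2, h3, Set.ncard_union_eq hdisj (Set.toFinite _) (Set.toFinite _),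
    Set.ncard_diff hsub (Set.toFinite _)]
  omega

end Aux

/-- Cut-generation rule: if `a ≠ b` in `U` lie in different components of `G` or are at
distance at least `4`, then some optimal bicluster editing has no `k ∈ V` adjacent to both. -/
theorem exists_optimal_editing_no_common_neighbor [Fintype α] (G : SimpleGraph α)
    (U V : Set α) (hG : IsBipartiteWith G U V) (a b : α) (ha : a ∈ U) (hb : b ∈ U)
    (hne : a ≠ b) (hab : ¬ G.Reachable a b ∨ 4 ≤ G.dist a b) :
    ∃ H : SimpleGraph α, IsOptimalBiclusterEditing G H U V ∧
      ∀ k ∈ V, ¬ (H.Adj a k ∧ H.Adj b k) := by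
  classical
  obtain ⟨hcov, hdisjUV, hGadj⟩ := hG
  -- an optimal bicluster editing exists
  have hbot : IsBiclusterGraph (⊥ : SimpleGraph α) U V := by
    refine ⟨⟨hcov, hdisjUV, fun x y h => (h : False).elim⟩, ?_⟩
    intro i hi j hj hr
    rw [SimpleGraph.reachable_bot] at hr
    exact absurd (hr ▸ hj) (Set.disjoint_left.mp hdisjUV hi)
  set S : Set ℕ := {n | ∃ K : SimpleGraph α, IsBiclusterGraph K U V ∧ editCost G K = n} with hS
  have hSne : S.Nonempty := ⟨editCost G ⊥, ⊥, hbot, rfl⟩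
  obtain ⟨H, hH, hHc⟩ := Nat.sInf_mem hSne
  have hopt : ∀ H' : SimpleGraph α, IsBiclusterGraph H' U V → editCost G H ≤ editCost G H' := by
    intro H' hH'
    rw [hHc]
    exact Nat.sInf_le ⟨H', hH', rfl⟩
  by_cases hex : ∃ k ∈ V, H.Adj a k ∧ H.Adj b k
  · -- a and b share a neighbor in H: they lie in a common biclique
    obtain ⟨k0, hk0V, hak0, hbk0⟩ := hex
    -- same neighbor set
    have hmemV : ∀ {u j : α}, u ∈ U → H.Adj u j → j ∈ V := by
      intro u j hu h
      rcases hH.1.2.2 h with ⟨_, hj⟩ | ⟨hu', _⟩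
      · exact hj
      · exact absurd hu' (Set.disjoint_left.mp hdisjUV hu)
    have hnbr : H.neighborSet b = H.neighborSet a := by
      ext j
      simp only [SimpleGraph.mem_neighborSet]
      constructor
      · intro h
        exact hH.2 a ha j (hmemV hb h)
          ⟨SimpleGraph.Walk.cons hak0 (SimpleGraph.Walk.cons hbk0.symm
            (SimpleGraph.Walk.cons h SimpleGraph.Walk.nil))⟩
      · intro h
        exact hH.2 b hb j (hmemV ha h)
          ⟨SimpleGraph.Walk.cons hbk0 (SimpleGraph.Walk.cons hak0.symm
            (SimpleGraph.Walk.cons h SimpleGraph.Walk.nil))⟩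
    set T := H.neighborSet a with hT
    -- a and b have no common neighbor in G
    have hGdisj : Disjoint (G.neighborSet a ∩ T) (G.neighborSet b ∩ T) := by
      rw [Set.disjoint_left]
      rintro k ⟨hka, _⟩ ⟨hkb, _⟩
      rcases hab with hr | hd
      · exact hr ⟨SimpleGraph.Walk.cons hka (SimpleGraph.Walk.cons hkb.symm SimpleGraph.Walk.nil)⟩
      · have := SimpleGraph.dist_le
          (SimpleGraph.Walk.cons hka (SimpleGraph.Walk.cons hkb.symm SimpleGraph.Walk.nil))
        change G.dist a b ≤ 2 at this
        omega
    have hsum : (G.neighborSet a ∩ T).ncard + (G.neighborSet b ∩ T).ncard ≤ T.ncard := by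
      rw [← Set.ncard_union_eq hGdisj (Set.toFinite _) (Set.toFinite _)]
      exact Set.ncard_le_ncard (by
        rintro k (⟨_, hk⟩ | ⟨_, hk⟩) <;> exact hk) (Set.toFinite _)
    have hnba : G.neighborSet a ∩ H.neighborSet a = G.neighborSet a ∩ T := rfl
    have hnbb : G.neighborSet b ∩ H.neighborSet b = G.neighborSet b ∩ T := by rw [hnbr]
    by_cases hcmp : (G.neighborSet a ∩ T).ncard ≤ (G.neighborSet b ∩ T).ncard
    · -- isolate a
      have hcond : 2 * (G.neighborSet a ∩ H.neighborSet a).ncard ≤ (H.neighborSet a).ncard := by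
        rw [hnba, ← hT]; omega
      refine ⟨eraseVert H a, ⟨eraseVert_bicluster hH ha, ?_⟩, ?_⟩
      · intro H' hH'
        exact le_trans (eraseVert_cost_le hcond) (hopt H' hH')
      · intro k _ ⟨h1, _⟩
        exact eraseVert_not_adj H a k h1
    · -- isolate b
      have hcond : 2 * (G.neighborSet b ∩ H.neighborSet b).ncard ≤ (H.neighborSet b).ncard := by
        rw [hnbb, hnbr]; omega
      refine ⟨eraseVert H b, ⟨eraseVert_bicluster hH hb, ?_⟩, ?_⟩
      · intro H' hH'
        exact le_trans (eraseVert_cost_le hcond) (hopt H' hH')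
      · intro k _ ⟨_, h2⟩
        exact eraseVert_not_adj H b k h2
  · push_neg at hex
    exact ⟨H, ⟨hH, hopt⟩, fun k hk h => hex k hk h.1 h.2⟩
end

section
/- Let G be a finite bipartite graph with bipartition (U, V) and m = |E(G)| ≥ 1 edges, and let H* be an optimal bicluster editing of G with d* = |E(G) \ E(H*)| deletions and a* = |E(H*) \ E(G)| additions. Then for every bicluster graph H on the same vertex set and bipartition, with d = |E(G) \ E(H)| and a = |E(H) \ E(G)|, the grouping efficacy satisfies (m − d)/(m + a) ≤ m/(m + a* + d*); moreover, the maximum grouping efficacy over all bicluster graphs on this bipartition is at least (m − d*)/(m + a*). -/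
variable {α : Type*}

/-- Bounds from an optimal bicluster editing `H*` of `G` with `d*` deletions and `a*`
additions: every bicluster graph has efficacy at most `m/(m + a* + d*)`, and the maximum
efficacy over all bicluster graphs is at least `(m - d*)/(m + a*)`. -/
theorem efficacy_bounds_from_optimal_editing [Fintype α] (G : SimpleGraph α) (U V : Set α)
    (hG : IsBipartiteWith G U V) (hm : 1 ≤ G.edgeSet.ncard)
    (Hstar : SimpleGraph α) (hopt : IsOptimalBiclusterEditing G Hstar U V) :
    (∀ H : SimpleGraph α, IsBiclusterGraph H U V →
        efficacy G H ≤ (G.edgeSet.ncard : ℝ) /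
          ((G.edgeSet.ncard : ℝ) + ((Hstar.edgeSet \ G.edgeSet).ncard : ℝ) +
            ((G.edgeSet \ Hstar.edgeSet).ncard : ℝ))) ∧
      ∃ H : SimpleGraph α, IsBiclusterGraph H U V ∧
        ((G.edgeSet.ncard : ℝ) - ((G.edgeSet \ Hstar.edgeSet).ncard : ℝ)) /
            ((G.edgeSet.ncard : ℝ) + ((Hstar.edgeSet \ G.edgeSet).ncard : ℝ)) ≤
          efficacy G H ∧
        ∀ H' : SimpleGraph α, IsBiclusterGraph H' U V → efficacy G H' ≤ efficacy G H := by
  classical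
  haveI : Finite (SimpleGraph α) :=
    Finite.of_injective SimpleGraph.Adj fun _ _ h => SimpleGraph.ext h
  obtain ⟨hHstar, hmin⟩ := hopt
  have hm1 : (1 : ℝ) ≤ (G.edgeSet.ncard : ℝ) := by exact_mod_cast hm
  constructor
  · intro H hH
    have hcost : ((G.edgeSet \ Hstar.edgeSet).ncard : ℝ) +
        ((Hstar.edgeSet \ G.edgeSet).ncard : ℝ) ≤
        ((G.edgeSet \ H.edgeSet).ncard : ℝ) + ((H.edgeSet \ G.edgeSet).ncard : ℝ) := by
      exact_mod_cast hmin H hH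
    have hd : ((G.edgeSet \ H.edgeSet).ncard : ℝ) ≤ (G.edgeSet.ncard : ℝ) := by
      exact_mod_cast Set.ncard_le_ncard Set.diff_subset G.edgeSet.toFinite
    have ha : (0 : ℝ) ≤ ((H.edgeSet \ G.edgeSet).ncard : ℝ) := Nat.cast_nonneg _
    have hds : (0 : ℝ) ≤ ((G.edgeSet \ Hstar.edgeSet).ncard : ℝ) := Nat.cast_nonneg _
    have has : (0 : ℝ) ≤ ((Hstar.edgeSet \ G.edgeSet).ncard : ℝ) := Nat.cast_nonneg _
    rw [efficacy, div_le_div_iff₀ (by linarith) (by linarith)]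
    nlinarith [mul_nonneg (sub_nonneg.2 hd) (by linarith :
      (0:ℝ) ≤ ((G.edgeSet \ H.edgeSet).ncard : ℝ) + ((H.edgeSet \ G.edgeSet).ncard : ℝ)
        - (((G.edgeSet \ Hstar.edgeSet).ncard : ℝ) + ((Hstar.edgeSet \ G.edgeSet).ncard : ℝ)))]
  · obtain ⟨H, hHS, hmax⟩ := Set.exists_max_image {H | IsBiclusterGraph H U V}
      (efficacy G) (Set.toFinite _) ⟨Hstar, hHstar⟩
    exact ⟨H, hHS, hmax Hstar hHstar, fun H' h' => hmax H' h'⟩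
end

section
/- Let G be a finite bipartite graph with bipartition (U, V) and m = |E(G)| ≥ 1 edges. Suppose H0 is a bicluster graph on the same vertex set and bipartition with grouping efficacy μ0, and suppose K is a natural number such that m/(m + K) ≤ μ0 and such that every bicluster graph H on this bipartition with edit cost relative to G strictly less than K has grouping efficacy at most μ0. Then every bicluster graph on this bipartition has grouping efficacy at most μ0; that is, μ0 is the maximum grouping efficacy. -/
variable {α : Type*}

/-- Termination criterion of the exact iterative method: if `μ0` is attained by some
bicluster graph `H0`, `m/(m + K) ≤ μ0`, and every bicluster graph with edit cost below `K`
has efficacy at most `μ0`, then every bicluster graph has efficacy at most `μ0`. -/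
theorem efficacy_max_of_bound [Fintype α] (G : SimpleGraph α) (U V : Set α)
    (hG : IsBipartiteWith G U V) (hm : 1 ≤ G.edgeSet.ncard)
    (H0 : SimpleGraph α) (hH0 : IsBiclusterGraph H0 U V)
    (μ0 : ℝ) (hμ0 : efficacy G H0 = μ0) (K : ℕ)
    (hK : (G.edgeSet.ncard : ℝ) / ((G.edgeSet.ncard : ℝ) + (K : ℝ)) ≤ μ0)
    (hless : ∀ H : SimpleGraph α, IsBiclusterGraph H U V → editCost G H < K →
      efficacy G H ≤ μ0) :
    ∀ H : SimpleGraph α, IsBiclusterGraph H U V → efficacy G H ≤ μ0 := by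
  intro H hH
  by_cases h : editCost G H < K
  · exact hless H hH h
  push_neg at h
  have hd : (G.edgeSet \ H.edgeSet).ncard ≤ G.edgeSet.ncard :=
    Set.ncard_le_ncard Set.diff_subset G.edgeSet.toFinite
  refine le_trans ?_ hK
  unfold efficacy
  have hK' : (K : ℝ) ≤ ((G.edgeSet \ H.edgeSet).ncard : ℝ) +
      ((H.edgeSet \ G.edgeSet).ncard : ℝ) := by
    unfold editCost at h; exact_mod_cast h
  have hd' : ((G.edgeSet \ H.edgeSet).ncard : ℝ) ≤ (G.edgeSet.ncard : ℝ) := by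
    exact_mod_cast hd
  have hm' : (1 : ℝ) ≤ (G.edgeSet.ncard : ℝ) := by exact_mod_cast hm
  have ha : (0 : ℝ) ≤ ((H.edgeSet \ G.edgeSet).ncard : ℝ) := by positivity
  have hk0 : (0 : ℝ) ≤ (K : ℝ) := by positivity
  rw [div_le_div_iff₀ (by linarith) (by linarith)]
  nlinarith [mul_nonneg (sub_nonneg.2 hd') hk0]
end
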